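/- For fixed partitions μ and ν, there exists a partition λ with |λ| = k and N_{μ,ν,λ} > 0 if and only if k ≡ |μ Δ ν| (mod 2) and |μ Δ ν| ≤ k ≤ |μ| + |ν|, where |μ Δ ν| = |μ| + |ν| − 2|μ ∧ ν| is the size of the symmetric difference of the Young diagrams. -/

import Mathlib

open YoungDiagram

/-- An LR (Littlewood–Richardson) filling witnessing the Littlewood–Richardson
coefficient `c^lam_{μ,ν}`: a ballot (lattice-word) semistandard filling of the skew
shape `lam/μ` with content `ν`.  The entry in row `i`, column `j` is `T i j`;
entries are `≥ 1` on the cells of `lam/μ` and `0` elsewhere. -/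
structure LRFilling (μ ν lam : YoungDiagram) : Type where
  sub : μ ≤ lam
  T : ℕ → ℕ → ℕ
  supp : ∀ i j, T i j ≠ 0 ↔ ((i, j) ∈ lam ∧ (i, j) ∉ μ)
  rows_weak : ∀ i j₁ j₂, j₁ ≤ j₂ → T i j₁ ≠ 0 → T i j₂ ≠ 0 → T i j₁ ≤ T i j₂
  cols_strict : ∀ i₁ i₂ j, i₁ < i₂ → T i₁ j ≠ 0 → T i₂ j ≠ 0 → T i₁ j < T i₂ j
  content : ∀ k : ℕ, Nat.card {p : ℕ × ℕ // T p.1 p.2 = k + 1} = ν.rowLen k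
  ballot : ∀ i j k : ℕ,
    Nat.card {p : ℕ × ℕ // (p.1 < i ∨ (p.1 = i ∧ j ≤ p.2)) ∧ T p.1 p.2 = k + 2} ≤
      Nat.card {p : ℕ × ℕ // (p.1 < i ∨ (p.1 = i ∧ j ≤ p.2)) ∧ T p.1 p.2 = k + 1}

/-- The Littlewood–Richardson coefficient `c^lam_{μ,ν}`. -/
noncomputable def lrCoeff (μ ν lam : YoungDiagram) : ℕ := Nat.card (LRFilling μ ν lam)

/-- The Newell–Littlewood number
`N_{μ,ν,lam} = Σ_{α,β,γ} c^μ_{α,β} c^ν_{α,γ} c^lam_{β,γ}`,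
realized as the cardinality of the set of triples of LR fillings over all `α,β,γ`. -/
noncomputable def NL (μ ν lam : YoungDiagram) : ℕ :=
  Nat.card (Σ α β γ : YoungDiagram,
    (LRFilling α β μ × LRFilling α γ ν × LRFilling β γ lam))


section Aux
open Finset

lemma coord_lt_card {μ : YoungDiagram} {i j : ℕ} (h : (i,j) ∈ μ) :
    i < μ.card ∧ j < μ.card := by
  have h1 : i < μ.colLen j := mem_iff_lt_colLen.mp h
  have h2 : j < μ.rowLen i := mem_iff_lt_rowLen.mp h
  have hc : μ.colLen j ≤ μ.card := by
    rw [colLen_eq_card]; exact Finset.card_le_card (Finset.filter_subset _ _)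
  have hr : μ.rowLen i ≤ μ.card := by
    rw [rowLen_eq_card]; exact Finset.card_le_card (Finset.filter_subset _ _)
  omega

lemma rowLen_le_card (μ : YoungDiagram) (i : ℕ) : μ.rowLen i ≤ μ.card := by
  rw [rowLen_eq_card]; exact Finset.card_le_card (Finset.filter_subset _ _)

lemma ydCard_mono {α δ : YoungDiagram} (h : α ≤ δ) : α.card ≤ δ.card :=
  Finset.card_le_card (cells_subset_iff.mpr h)

lemma card_eq_sum_rowLen (β : YoungDiagram) (K : ℕ) (hK : β.colLen 0 ≤ K) :
    β.card = ∑ k ∈ Finset.range K, β.rowLen k := by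
  rw [show β.card = β.cells.card from rfl,
    Finset.card_eq_sum_card_fiberwise (f := Prod.fst) (t := Finset.range K)]
  · refine Finset.sum_congr rfl fun k _ => ?_
    rw [rowLen_eq_card]
    rfl
  · intro p hp
    rw [Finset.mem_coe, Finset.mem_range]
    have hp' : (p.1, p.2) ∈ β := by simpa using hp
    have := mem_iff_lt_colLen.mp hp'
    have := β.colLen_anti 0 p.2 (Nat.zero_le _)
    omega

lemma erase_max (δ : YoungDiagram) (h : 0 < δ.card) :
    ∃ δ' : YoungDiagram, δ' ≤ δ ∧ δ'.card + 1 = δ.card := by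
  have h00 : (0, 0) ∈ δ := by
    obtain ⟨⟨i, j⟩, hij⟩ := Finset.card_pos.mp h
    exact δ.up_left_mem (Nat.zero_le _) (Nat.zero_le _) (by simpa using hij)
  have hc0 : 0 < δ.colLen 0 := mem_iff_lt_colLen.mp h00
  set r := δ.colLen 0 - 1 with hr
  have hr0 : (r, 0) ∈ δ := mem_iff_lt_colLen.mpr (by omega)
  have hrl : 0 < δ.rowLen r := Nat.pos_of_ne_zero fun hz => by
    have := mem_iff_lt_rowLen.mp hr0; omega
  set c : ℕ × ℕ := (r, δ.rowLen r - 1) with hcdef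
  have hcmem : c ∈ δ := mem_iff_lt_rowLen.mpr (by omega)
  refine ⟨⟨δ.cells.erase c, ?_⟩, ?_, ?_⟩
  · intro p q hqp hp
    simp only [Finset.coe_erase, Set.mem_diff, Finset.coe_insert, Set.mem_singleton_iff] at hp ⊢
    obtain ⟨hp1, hp2⟩ := hp
    have hq : q ∈ δ := δ.up_left_mem hqp.1 hqp.2 (by simpa using hp1)
    refine ⟨by simpa using hq, fun hqc => ?_⟩
    -- q = c, so p ≥ c componentwise, p ∈ δ forces p = c
    subst hqc
    obtain ⟨h1, h2⟩ := hqp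
    have hp1' : (p.1, p.2) ∈ δ := by simpa using hp1
    have hpc : p.1 < δ.colLen p.2 := mem_iff_lt_colLen.mp hp1'
    have hpcc : δ.colLen p.2 ≤ δ.colLen 0 := δ.colLen_anti 0 p.2 (Nat.zero_le _)
    have hp1r : p.1 = r := by simp only [hcdef] at h1; omega
    have hpr : p.2 < δ.rowLen r := by
      have := mem_iff_lt_rowLen.mp (hp1r ▸ hp1')
      exact this
    have hp2r : p.2 = δ.rowLen r - 1 := by simp only [hcdef] at h2; omega
    apply hp2
    have : p = (p.1, p.2) := rfl
    rw [this, hp1r, hp2r]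
  · intro p hp
    exact Finset.mem_of_mem_erase hp
  · exact Finset.card_erase_add_one hcmem

lemma exists_sub_card_aux : ∀ (d : ℕ) (δ : YoungDiagram), δ.card ≤ d →
    ∀ m, m ≤ δ.card → ∃ α : YoungDiagram, α ≤ δ ∧ α.card = m := by
  intro d
  induction d with
  | zero => intro δ hδ m hm; exact ⟨⊥, bot_le, by simp [YoungDiagram.card]; omega⟩
  | succ n ih =>
    intro δ hδ m hm
    rcases eq_or_lt_of_le hm with he | hlt
    · exact ⟨δ, le_refl _, he.symm⟩
    · obtain ⟨δ', hle, hcard⟩ := erase_max δ (by omega)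
      obtain ⟨α, hα, hαc⟩ := ih δ' (by omega) m (by omega)
      exact ⟨α, le_trans hα hle, hαc⟩

lemma exists_sub_card (δ : YoungDiagram) (m : ℕ) (hm : m ≤ δ.card) :
    ∃ α : YoungDiagram, α ≤ δ ∧ α.card = m :=
  exists_sub_card_aux δ.card δ le_rfl m hm

lemma natCard_subtype_eq_filter (P : ℕ × ℕ → Prop) [DecidablePred P] (s : Finset (ℕ × ℕ))
    (h : ∀ p, P p → p ∈ s) :
    Nat.card {p : ℕ × ℕ // P p} = (s.filter P).card := by
  rw [← Nat.card_eq_finsetCard]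
  exact Nat.card_congr (Equiv.subtypeEquivRight (fun p => by
    simp only [Finset.mem_filter]
    exact ⟨fun hp => ⟨h p hp, hp⟩, fun hp => hp.2⟩))

namespace LRFilling
variable {α β μ : YoungDiagram} (F : LRFilling α β μ)

lemma mem_of_ne_zero {i j : ℕ} (h : F.T i j ≠ 0) : (i, j) ∈ μ :=
  ((F.supp i j).mp h).1

lemma fiber_subset (k : ℕ) : ∀ p : ℕ × ℕ, F.T p.1 p.2 = k + 1 → p ∈ μ.cells \ α.cells := by
  intro p hp
  have h := (F.supp p.1 p.2).mp (by omega)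
  simp only [Finset.mem_sdiff, YoungDiagram.mem_cells]
  exact h

lemma fiber_card (k : ℕ) :
    ((μ.cells \ α.cells).filter (fun p => F.T p.1 p.2 = k + 1)).card = β.rowLen k := by
  rw [← natCard_subtype_eq_filter _ _ (F.fiber_subset k)]
  exact F.content k

lemma val_le {i j : ℕ} (h : F.T i j ≠ 0) : F.T i j ≤ β.colLen 0 := by
  set v := F.T i j with hv
  have hmem : (i, j) ∈ (μ.cells \ α.cells).filter (fun p => F.T p.1 p.2 = (v - 1) + 1) := by
    refine Finset.mem_filter.mpr ⟨F.fiber_subset (v-1) (i,j) ?_, ?_⟩ <;>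
      · show F.T i j = v - 1 + 1
        omega
  have hpos : 0 < β.rowLen (v - 1) := by
    rw [← F.fiber_card]
    exact Finset.card_pos.mpr ⟨_, hmem⟩
  have : (v - 1, 0) ∈ β := mem_iff_lt_rowLen.mpr hpos
  have := mem_iff_lt_colLen.mp this
  omega

include F in
lemma card_add_card : α.card + β.card = μ.card := by
  have hsub : α.cells ⊆ μ.cells := cells_subset_iff.mpr F.sub
  have h1 : (μ.cells \ α.cells).card + α.card = μ.card :=
    Finset.card_sdiff_add_card_eq_card hsub
  set K := β.colLen 0 with hK
  have h2 : μ.cells \ α.cells =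
      (Finset.range K).biUnion
        (fun k => (μ.cells \ α.cells).filter (fun p => F.T p.1 p.2 = k + 1)) := by
    apply Finset.ext
    intro p
    simp only [Finset.mem_biUnion, Finset.mem_range, Finset.mem_filter]
    constructor
    · intro hp
      have hp' : (p.1, p.2) ∈ μ ∧ (p.1, p.2) ∉ α := by
        constructor <;> simp only [Finset.mem_sdiff, YoungDiagram.mem_cells] at hp
        · exact (by simpa using hp.1)
        · exact (by simpa using hp.2)
      have hne : F.T p.1 p.2 ≠ 0 := (F.supp p.1 p.2).mpr hp'
      refine ⟨F.T p.1 p.2 - 1, ?_, hp, by omega⟩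
      have := F.val_le hne
      omega
    · rintro ⟨k, _, hp, _⟩; exact hp
  have h3 : (μ.cells \ α.cells).card = ∑ k ∈ Finset.range K, β.rowLen k := by
    rw [h2, Finset.card_biUnion]
    · exact Finset.sum_congr rfl fun k _ => F.fiber_card k
    · intro x _ y _ hxy
      apply Finset.disjoint_left.mpr
      intro p hp hp2
      simp only [Finset.mem_filter] at hp hp2
      omega
  have h4 : β.card = ∑ k ∈ Finset.range K, β.rowLen k := card_eq_sum_rowLen β K le_rfl
  omega

end LRFilling

section ConA
variable (α μ : YoungDiagram)

/-- Number of columns whose skew column μ/α has length > k. -/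
def cA (k : ℕ) : ℕ :=
  ((Finset.range μ.card).filter (fun j => α.colLen j + k < μ.colLen j)).card

lemma cA_anti {k₁ k₂ : ℕ} (h : k₁ ≤ k₂) : cA α μ k₂ ≤ cA α μ k₁ := by
  apply Finset.card_le_card
  intro j hj
  simp only [Finset.mem_filter] at hj ⊢
  exact ⟨hj.1, by omega⟩

lemma cA_le : ∀ k, cA α μ k ≤ μ.card := fun k =>
  le_trans (Finset.card_le_card (Finset.filter_subset _ _)) (by simp)

lemma cA_pos_lt {k : ℕ} (h : 0 < cA α μ k) : k < μ.card := by
  obtain ⟨j, hj⟩ := Finset.card_pos.mp h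
  rw [Finset.mem_filter] at hj
  have hm : (α.colLen j + k, j) ∈ μ := mem_iff_lt_colLen.mpr hj.2
  have := (coord_lt_card hm).1
  omega

/-- The content partition of the canonical filling of μ/α. -/
def betaA : YoungDiagram where
  cells := (Finset.range μ.card ×ˢ Finset.range (μ.card + 1)).filter
      (fun p => p.2 < cA α μ p.1)
  isLowerSet := by
    intro p q hqp hp
    simp only [Finset.coe_filter, Set.mem_setOf_eq, Finset.mem_product,
      Finset.mem_range] at hp ⊢
    obtain ⟨⟨h1, h2⟩, h3⟩ := hp
    obtain ⟨h4, h5⟩ := hqp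
    have := cA_anti α μ h4
    refine ⟨⟨by omega, by omega⟩, by omega⟩

lemma mem_betaA {k m : ℕ} : (k, m) ∈ betaA α μ ↔ m < cA α μ k := by
  show (k, m) ∈ Finset.filter _ _ ↔ _
  simp only [Finset.mem_filter, Finset.mem_product, Finset.mem_range]
  constructor
  · exact fun h => h.2
  · intro h
    have h1 : k < μ.card := cA_pos_lt α μ (show 0 < cA α μ k by omega)
    have h2 := cA_le α μ k
    exact ⟨⟨h1, by omega⟩, h⟩

lemma rowLen_betaA (k : ℕ) : (betaA α μ).rowLen k = cA α μ k := by
  rcases Nat.lt_or_ge ((betaA α μ).rowLen k) (cA α μ k) with h | h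
  · exfalso
    have : (k, (betaA α μ).rowLen k) ∈ betaA α μ := (mem_betaA α μ).mpr h
    have := mem_iff_lt_rowLen.mp this
    omega
  · rcases Nat.lt_or_ge (cA α μ k) ((betaA α μ).rowLen k) with h2 | h2
    · exfalso
      have : (k, cA α μ k) ∈ betaA α μ := mem_iff_lt_rowLen.mpr h2
      have := (mem_betaA α μ).mp this
      omega
    · omega

/-- The canonical filling of μ/α : entry at (i,j) is its position in its skew column. -/
def TA (i j : ℕ) : ℕ :=
  if (i, j) ∈ μ ∧ (i, j) ∉ α then i + 1 - α.colLen j else 0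

lemma TA_eq_iff {i j k : ℕ} :
    TA α μ i j = k + 1 ↔ (i = α.colLen j + k ∧ α.colLen j + k < μ.colLen j) := by
  unfold TA
  split_ifs with h
  · obtain ⟨h1, h2⟩ := h
    have ha : α.colLen j ≤ i := by
      by_contra hc
      exact h2 (mem_iff_lt_colLen.mpr (by omega))
    have hm : i < μ.colLen j := mem_iff_lt_colLen.mp h1
    omega
  · constructor
    · intro h'
      simp_all
    · rintro ⟨h1, h2⟩
      exfalso
      apply h
      constructor
      · exact mem_iff_lt_colLen.mpr (by omega)
      · intro hc
        have := mem_iff_lt_colLen.mp hc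
        omega

lemma TA_ne_zero_iff {i j : ℕ} :
    TA α μ i j ≠ 0 ↔ ((i, j) ∈ μ ∧ (i, j) ∉ α) := by
  unfold TA
  split_ifs with h
  · simp only [iff_true_intro h, iff_true]
    have ha : α.colLen j ≤ i := by
      by_contra hc
      exact h.2 (mem_iff_lt_colLen.mpr (by omega))
    omega
  · simp [h]

variable {α μ} (hle : α ≤ μ)

/-- The canonical LR filling of the skew shape μ/α. -/
def fillingA : LRFilling α (betaA α μ) μ where
  sub := hle
  T := TA α μ
  supp := fun i j => TA_ne_zero_iff α μ
  rows_weak := by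
    intro i j₁ j₂ hj h1 h2
    rw [TA_ne_zero_iff] at h1 h2
    unfold TA
    rw [if_pos h1, if_pos h2]
    have := α.colLen_anti j₁ j₂ hj
    omega
  cols_strict := by
    intro i₁ i₂ j hi h1 h2
    rw [TA_ne_zero_iff] at h1 h2
    have ha : α.colLen j ≤ i₁ := by
      by_contra hc
      exact h1.2 (mem_iff_lt_colLen.mpr (by omega))
    unfold TA
    rw [if_pos h1, if_pos h2]
    omega
  content := by
    intro k
    rw [rowLen_betaA]
    have e : {p : ℕ × ℕ // TA α μ p.1 p.2 = k + 1} ≃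
        {j : ℕ // j ∈ (Finset.range μ.card).filter (fun j => α.colLen j + k < μ.colLen j)} := by
      refine ⟨fun p => ⟨p.1.2, ?_⟩, fun j => ⟨(α.colLen j.1 + k, j.1), ?_⟩, ?_, ?_⟩
      · have h := (TA_eq_iff α μ).mp p.2
        have hm : (α.colLen p.1.2 + k, p.1.2) ∈ μ := mem_iff_lt_colLen.mpr h.2
        have := (coord_lt_card hm).2
        simp only [Finset.mem_filter, Finset.mem_range]
        exact ⟨this, h.2⟩
      · apply (TA_eq_iff α μ).mpr
        have := j.2
        simp only [Finset.mem_filter, Finset.mem_range] at this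
        exact ⟨rfl, this.2⟩
      · rintro ⟨⟨i, j⟩, hp⟩
        have h := (TA_eq_iff α μ).mp hp
        apply Subtype.ext
        have h1 : i = α.colLen j + k := h.1
        show (α.colLen j + k, j) = (i, j)
        rw [h1]
      · rintro ⟨j, hj⟩
        rfl
    rw [Nat.card_congr e, Nat.card_eq_finsetCard]
    rfl
  ballot := by
    intro i₀ j₀ k
    have hfin : Finite {p : ℕ × ℕ //
        (p.1 < i₀ ∨ (p.1 = i₀ ∧ j₀ ≤ p.2)) ∧ TA α μ p.1 p.2 = k + 1} := by
      apply Set.Finite.to_subtype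
      apply Set.Finite.subset μ.cells.finite_toSet
      intro p hp
      have h2 : TA α μ p.1 p.2 = k + 1 := hp.2
      have := ((TA_eq_iff α μ).mp h2)
      have hm : (p.1, p.2) ∈ μ := mem_iff_lt_colLen.mpr (show p.1 < μ.colLen p.2 by omega)
      simpa using hm
    apply Nat.card_le_card_of_injective
      (f := fun p => ⟨(p.1.1 - 1, p.1.2), by
        obtain ⟨⟨i, j⟩, hreg, hT⟩ := p
        have hT' : TA α μ i j = (k + 1) + 1 := hT
        have hreg' : i < i₀ ∨ (i = i₀ ∧ j₀ ≤ j) := hreg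
        have h := (TA_eq_iff α μ).mp hT'
        constructor
        · show i - 1 < i₀ ∨ (i - 1 = i₀ ∧ j₀ ≤ j)
          left
          rcases hreg' with h' | h' <;> omega
        · show TA α μ (i - 1) j = k + 1
          apply (TA_eq_iff α μ).mpr
          exact ⟨by omega, by omega⟩⟩)
    rintro ⟨⟨i, j⟩, hp⟩ ⟨⟨i', j'⟩, hp'⟩ h
    simp only [Subtype.mk.injEq, Prod.mk.injEq] at h
    have h1 : i = α.colLen j + (k + 1) ∧ _ := (TA_eq_iff α μ).mp hp.2
    have h2 : i' = α.colLen j' + (k + 1) ∧ _ := (TA_eq_iff α μ).mp hp'.2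
    obtain ⟨hi, hj⟩ := h
    subst hj
    apply Subtype.ext
    show (i, j) = (i', j)
    have : i = i' := by omega
    rw [this]

end ConA

section ConB
variable (β γ : YoungDiagram)

/-- The diagram with row lengths `β.rowLen i + γ.rowLen i`. -/
def lamB : YoungDiagram where
  cells := (Finset.range (β.card + γ.card + 1) ×ˢ Finset.range (β.card + γ.card + 1)).filter
      (fun p => p.2 < β.rowLen p.1 + γ.rowLen p.1)
  isLowerSet := by
    intro p q hqp hp
    simp only [Finset.coe_filter, Set.mem_setOf_eq, Finset.mem_product,
      Finset.mem_range] at hp ⊢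
    obtain ⟨⟨h1, h2⟩, h3⟩ := hp
    obtain ⟨h4, h5⟩ := hqp
    have hb := β.rowLen_anti q.1 p.1 h4
    have hg := γ.rowLen_anti q.1 p.1 h4
    refine ⟨⟨by omega, by omega⟩, by omega⟩

lemma mem_lamB {i j : ℕ} : (i, j) ∈ lamB β γ ↔ j < β.rowLen i + γ.rowLen i := by
  show (i, j) ∈ Finset.filter _ _ ↔ _
  simp only [Finset.mem_filter, Finset.mem_product, Finset.mem_range]
  constructor
  · exact fun h => h.2
  · intro h
    have hb := rowLen_le_card β i
    have hg := rowLen_le_card γ i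
    have hi : i < β.card + γ.card + 1 := by
      by_contra hc
      have hb0 : β.rowLen i = 0 := by
        by_contra h0
        have : (i, 0) ∈ β := mem_iff_lt_rowLen.mpr (by omega)
        have := (coord_lt_card this).1
        omega
      have hg0 : γ.rowLen i = 0 := by
        by_contra h0
        have : (i, 0) ∈ γ := mem_iff_lt_rowLen.mpr (by omega)
        have := (coord_lt_card this).1
        omega
      omega
    exact ⟨⟨hi, by omega⟩, h⟩

lemma beta_le_lamB : β ≤ lamB β γ := by
  intro p hp
  have hp' : (p.1, p.2) ∈ β := by simpa using hp
  have := mem_iff_lt_rowLen.mp hp'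
  have hm : (p.1, p.2) ∈ lamB β γ := (mem_lamB β γ).mpr (by omega)
  simpa using hm

/-- Filling of lamB/β with content γ: row i gets entry i+1. -/
def TB (i j : ℕ) : ℕ :=
  if β.rowLen i ≤ j ∧ j < β.rowLen i + γ.rowLen i then i + 1 else 0

lemma TB_eq_iff {i j k : ℕ} :
    TB β γ i j = k + 1 ↔ (i = k ∧ β.rowLen k ≤ j ∧ j < β.rowLen k + γ.rowLen k) := by
  unfold TB
  split_ifs with h
  · constructor
    · intro h'
      have : i = k := by omega
      subst this
      exact ⟨rfl, h⟩
    · intro h'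
      omega
  · constructor
    · intro h'
      simp_all
    · intro h'
      exfalso
      apply h
      obtain ⟨h1, h2⟩ := h'
      subst h1
      exact h2

lemma TB_ne_zero_iff {i j : ℕ} :
    TB β γ i j ≠ 0 ↔ ((i, j) ∈ lamB β γ ∧ (i, j) ∉ β) := by
  rw [mem_lamB]
  unfold TB
  split_ifs with h
  · simp only [ne_eq, Nat.succ_ne_zero, not_false_iff, true_iff]
    constructor
    · omega
    · intro hc
      have := mem_iff_lt_rowLen.mp hc
      omega
  · simp only [ne_eq, not_true, false_iff]
    intro hc
    apply h
    obtain ⟨h1, h2⟩ := hc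
    have : ¬ j < β.rowLen i := fun hcc => h2 (mem_iff_lt_rowLen.mpr hcc)
    omega

/-- The canonical LR filling of lamB/β with content γ. -/
def fillingB : LRFilling β γ (lamB β γ) where
  sub := beta_le_lamB β γ
  T := TB β γ
  supp := fun i j => TB_ne_zero_iff β γ
  rows_weak := by
    intro i j₁ j₂ _ h1 h2
    unfold TB at *
    split_ifs at * <;> omega
  cols_strict := by
    intro i₁ i₂ j hi h1 h2
    unfold TB at *
    split_ifs at * <;> omega
  content := by
    intro k
    have e : {p : ℕ × ℕ // TB β γ p.1 p.2 = k + 1} ≃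
        {j : ℕ // j ∈ Finset.Ico (β.rowLen k) (β.rowLen k + γ.rowLen k)} := by
      refine ⟨fun p => ⟨p.1.2, ?_⟩, fun j => ⟨(k, j.1), ?_⟩, ?_, ?_⟩
      · have h := (TB_eq_iff β γ).mp p.2
        rw [Finset.mem_Ico]
        exact h.2
      · apply (TB_eq_iff β γ).mpr
        have := j.2
        rw [Finset.mem_Ico] at this
        exact ⟨rfl, this⟩
      · rintro ⟨⟨i, j⟩, hp⟩
        have h := (TB_eq_iff β γ).mp hp
        apply Subtype.ext
        have h1 : i = k := h.1
        show (k, j) = (i, j)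
        rw [h1]
      · rintro ⟨j, hj⟩
        rfl
    rw [Nat.card_congr e, Nat.card_eq_finsetCard, Nat.card_Ico]
    omega
  ballot := by
    intro i₀ j₀ k
    have hfin : Finite {p : ℕ × ℕ //
        (p.1 < i₀ ∨ (p.1 = i₀ ∧ j₀ ≤ p.2)) ∧ TB β γ p.1 p.2 = k + 1} := by
      apply Set.Finite.to_subtype
      apply Set.Finite.subset ((lamB β γ).cells.finite_toSet)
      intro p hp
      have h2 : TB β γ p.1 p.2 = k + 1 := hp.2
      have h := (TB_eq_iff β γ).mp h2
      have hm : (p.1, p.2) ∈ lamB β γ := (mem_lamB β γ).mpr (by rw [h.1]; omega)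
      simpa using hm
    apply Nat.card_le_card_of_injective
      (f := fun p => ⟨(k, p.1.2 - β.rowLen (k + 1) + β.rowLen k), by
        obtain ⟨⟨i, j⟩, hreg, hT⟩ := p
        have hT' : TB β γ i j = (k + 1) + 1 := hT
        have hreg' : i < i₀ ∨ (i = i₀ ∧ j₀ ≤ j) := hreg
        have h := (TB_eq_iff β γ).mp hT'
        have hganti := γ.rowLen_anti k (k + 1) (by omega)
        constructor
        · show k < i₀ ∨ (k = i₀ ∧ j₀ ≤ j - β.rowLen (k + 1) + β.rowLen k)
          left
          rcases hreg' with h' | h' <;> omega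
        · show TB β γ k (j - β.rowLen (k + 1) + β.rowLen k) = k + 1
          apply (TB_eq_iff β γ).mpr
          exact ⟨rfl, by omega, by omega⟩⟩)
    rintro ⟨⟨i, j⟩, hp⟩ ⟨⟨i', j'⟩, hp'⟩ h
    simp only [Subtype.mk.injEq, Prod.mk.injEq] at h
    have h1 : i = k + 1 ∧ β.rowLen (k+1) ≤ j ∧ j < β.rowLen (k+1) + γ.rowLen (k+1) :=
      (TB_eq_iff β γ).mp hp.2
    have h2 : i' = k + 1 ∧ β.rowLen (k+1) ≤ j' ∧ j' < β.rowLen (k+1) + γ.rowLen (k+1) :=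
      (TB_eq_iff β γ).mp hp'.2
    apply Subtype.ext
    show (i, j) = (i', j')
    obtain ⟨ha1, ha2, ha3⟩ := h1
    obtain ⟨hc1, hc2, hc3⟩ := h2
    have hj : j = j' := by omega
    rw [ha1, hc1, hj]

end ConB

lemma colLen_le_card (μ : YoungDiagram) (j : ℕ) : μ.colLen j ≤ μ.card := by
  rw [colLen_eq_card]; exact Finset.card_le_card (Finset.filter_subset _ _)

lemma LRFilling.ext' {α β μ : YoungDiagram} {F G : LRFilling α β μ} (h : F.T = G.T) : F = G := by
  cases F; cases G; simp_all

lemma LRFilling.val_bound {α β μ : YoungDiagram} (F : LRFilling α β μ) {N : ℕ}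
    (hN : β.card ≤ N) : ∀ i j, F.T i j ≤ N := by
  intro i j
  by_cases h : F.T i j = 0
  · omega
  · have h1 := F.val_le h
    have h2 := colLen_le_card β 0
    omega

lemma LRFilling.zero_out {α β μ : YoungDiagram} (F : LRFilling α β μ) {N : ℕ}
    (hN : μ.card ≤ N) : ∀ i j, N ≤ i ∨ N ≤ j → F.T i j = 0 := by
  intro i j hij
  by_contra h
  have := coord_lt_card (F.mem_of_ne_zero h)
  omega

def encD (N : ℕ) (δ : YoungDiagram) : Fin N × Fin N → Bool :=
  fun p => decide ((p.1.1, p.2.1) ∈ δ)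

def encT (N : ℕ) (t : ℕ → ℕ → ℕ) : Fin N × Fin N → Fin (N + 1) :=
  fun p => ⟨min (t p.1.1 p.2.1) N, by omega⟩

lemma encD_inj {N : ℕ} {δ δ' : YoungDiagram} (hδ : δ.card ≤ N) (hδ' : δ'.card ≤ N)
    (h : encD N δ = encD N δ') : δ = δ' := by
  ext ⟨i, j⟩
  constructor
  · intro hm
    have hb := coord_lt_card hm
    have := congrFun h (⟨i, by omega⟩, ⟨j, by omega⟩)
    simp only [encD, decide_eq_decide] at this
    exact this.mp hm
  · intro hm
    have hb := coord_lt_card hm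
    have := congrFun h (⟨i, by omega⟩, ⟨j, by omega⟩)
    simp only [encD, decide_eq_decide] at this
    exact this.mpr hm

lemma encT_eq {N : ℕ} {t t' : ℕ → ℕ → ℕ} (h : encT N t = encT N t')
    (hb : ∀ i j, t i j ≤ N) (hb' : ∀ i j, t' i j ≤ N)
    (hz : ∀ i j, N ≤ i ∨ N ≤ j → t i j = 0) (hz' : ∀ i j, N ≤ i ∨ N ≤ j → t' i j = 0) :
    t = t' := by
  funext i j
  by_cases hij : i < N ∧ j < N
  · have := congrFun h (⟨i, hij.1⟩, ⟨j, hij.2⟩)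
    simp only [encT, Fin.mk.injEq] at this
    have h1 := hb i j
    have h2 := hb' i j
    omega
  · rw [hz i j (by omega), hz' i j (by omega)]

lemma finite_sigma (μ ν lam : YoungDiagram) :
    Finite (Σ α β γ : YoungDiagram,
      (LRFilling α β μ × LRFilling α γ ν × LRFilling β γ lam)) := by
  set N := μ.card + ν.card + lam.card + 1 with hN
  apply Finite.of_injective (f := fun x : (Σ α β γ : YoungDiagram,
      (LRFilling α β μ × LRFilling α γ ν × LRFilling β γ lam)) =>
    (encD N x.1, encD N x.2.1, encD N x.2.2.1,
     encT N x.2.2.2.1.T, encT N x.2.2.2.2.1.T, encT N x.2.2.2.2.2.T))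
  rintro ⟨a, b, c, t1, t2, t3⟩ ⟨a', b', c', t1', t2', t3'⟩ h
  simp only [Prod.mk.injEq] at h
  obtain ⟨h1, h2, h3, h4, h5, h6⟩ := h
  have hab := t1.card_add_card
  have hac := t2.card_add_card
  have hbc := t3.card_add_card
  have hab' := t1'.card_add_card
  have hac' := t2'.card_add_card
  have hbc' := t3'.card_add_card
  have ha : a = a' := encD_inj (by omega) (by omega) h1
  subst ha
  have hb : b = b' := encD_inj (by omega) (by omega) h2
  subst hb
  have hc : c = c' := encD_inj (by omega) (by omega) h3
  subst hc
  have e1 : t1 = t1' := LRFilling.ext' (encT_eq h4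
    (t1.val_bound (by omega)) (t1'.val_bound (by omega))
    (t1.zero_out (by omega)) (t1'.zero_out (by omega)))
  have e2 : t2 = t2' := LRFilling.ext' (encT_eq h5
    (t2.val_bound (by omega)) (t2'.val_bound (by omega))
    (t2.zero_out (by omega)) (t2'.zero_out (by omega)))
  have e3 : t3 = t3' := LRFilling.ext' (encT_eq h6
    (t3.val_bound (by omega)) (t3'.val_bound (by omega))
    (t3.zero_out (by omega)) (t3'.zero_out (by omega)))
  rw [e1, e2, e3]

end Aux

/-- For fixed `μ, ν`, there is a partition `lam` of size `k` with
`N_{μ,ν,lam} > 0` iff `k ≡ |μ Δ ν| (mod 2)` and `|μ Δ ν| ≤ k ≤ |μ| + |ν|`, where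
`|μ Δ ν| = |μ| + |ν| - 2|μ ⊓ ν|`. -/
theorem NL_exists_of_size_iff (μ ν : YoungDiagram) (k : ℕ) :
    (∃ lam : YoungDiagram, lam.card = k ∧ 0 < NL μ ν lam) ↔
      (k % 2 = (μ.card + ν.card - 2 * (μ ⊓ ν).card) % 2 ∧
        μ.card + ν.card - 2 * (μ ⊓ ν).card ≤ k ∧ k ≤ μ.card + ν.card) := by
  have hI1 : (μ ⊓ ν).card ≤ μ.card := ydCard_mono inf_le_left
  have hI2 : (μ ⊓ ν).card ≤ ν.card := ydCard_mono inf_le_right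
  constructor
  · rintro ⟨lam, hcard, hpos⟩
    rw [NL] at hpos
    obtain ⟨⟨a, b, c, t1, t2, t3⟩, -⟩ := Nat.card_pos_iff.mp hpos
    have hab := t1.card_add_card
    have hac := t2.card_add_card
    have hbc := t3.card_add_card
    have h1 : a.card ≤ (μ ⊓ ν).card := ydCard_mono (le_inf t1.sub t2.sub)
    refine ⟨?_, ?_, ?_⟩ <;> omega
  · rintro ⟨hpar, hlo, hhi⟩
    obtain ⟨α, hαle, hαcard⟩ :=
      exists_sub_card (μ ⊓ ν) ((μ.card + ν.card - k) / 2) (by omega)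
    have t1 : LRFilling α (betaA α μ) μ := fillingA (le_trans hαle inf_le_left)
    have t2 : LRFilling α (betaA α ν) ν := fillingA (le_trans hαle inf_le_right)
    have t3 : LRFilling (betaA α μ) (betaA α ν) (lamB (betaA α μ) (betaA α ν)) :=
      fillingB (betaA α μ) (betaA α ν)
    have hab := t1.card_add_card
    have hac := t2.card_add_card
    have hbc := t3.card_add_card
    refine ⟨lamB (betaA α μ) (betaA α ν), by omega, ?_⟩
    rw [NL]
    rw [Nat.card_pos_iff]
    exact ⟨⟨⟨α, betaA α μ, betaA α ν, t1, t2, t3⟩⟩, finite_sigma μ ν _⟩
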